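/- arXiv:1503.01194 — 4 statements merged into one kernel-verified Lean document; each statement's English description precedes it below -/
import Mathlib

section
/- In the group ring ℚ[GL₄(ℤ)], with P = [[1,0,0,0],[-1,1,0,0],[0,-1,1,0],[0,0,-1,1]], S = [[1,0,0,0],[0,1,0,0],[0,0,1,0],[-1,-1,-1,1]], Ψ = I + [[1,0,0,0],[0,1,0,0],[0,0,1,1],[0,0,0,-1]] + [[1,0,0,0],[0,1,1,1],[0,0,-1,-1],[0,0,1,0]] + [[1,1,1,1],[0,-1,-1,-1],[0,1,0,0],[0,0,1,0]], and sh(3,4) = e+(34)+(234)+(1234) (permutations as permutation matrices), one has P · sh(3,4) · (E₃⊕I₁) = Ψ·S, where E₃ = [[1,0,0],[1,1,0],[1,1,1]] and E₃⊕I₁ is the block diagonal 4×4 matrix. -/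
/-- 4×4 integer matrices. -/
abbrev M4 : Type := Matrix (Fin 4) (Fin 4) ℤ
/-- The ℚ-algebra spanned freely by 4×4 integer matrices (containing the group
ring ℚ[GL₄(ℤ)] as the span of the invertible matrices). -/
abbrev QM4 : Type := MonoidAlgebra ℚ M4
/-- The canonical embedding of a matrix into the monoid algebra. -/
noncomputable def emb (M : M4) : QM4 := MonoidAlgebra.single M 1
/-- Permutation matrix `(δ_{i σ(j)})` of `σ ∈ S₄`. -/
def pm (σ : Equiv.Perm (Fin 4)) : M4 := Matrix.of fun i j => if i = σ j then 1 else 0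
/-- The shuffle element sh(2,4) = ∑_{σ(1)<σ(2), σ(3)<σ(4)} σ. -/
noncomputable def sh24 : QM4 :=
  ∑ σ ∈ Finset.univ.filter (fun σ : Equiv.Perm (Fin 4) => σ 0 < σ 1 ∧ σ 2 < σ 3), emb (pm σ)
/-- The element Φ. -/
noncomputable def Phi : QM4 :=
  emb 1 + emb !![1,0,0,0; 0,1,1,0; 0,0,-1,0; 0,0,1,1]
    + emb !![1,1,1,0; 0,-1,-1,0; 0,1,0,0; 0,0,1,1]
/-- The element Ψ. -/
noncomputable def Psi : QM4 :=
  emb 1 + emb !![1,0,0,0; 0,1,0,0; 0,0,1,1; 0,0,0,-1]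
    + emb !![1,0,0,0; 0,1,1,1; 0,0,-1,-1; 0,0,1,0]
    + emb !![1,1,1,1; 0,-1,-1,-1; 0,1,0,0; 0,0,1,0]
/-- The 4-cycle (1234): 1↦2↦3↦4↦1 (on Fin 4: 0↦1↦2↦3↦0). -/
def c1234 : Equiv.Perm (Fin 4) := Equiv.swap 0 1 * Equiv.swap 1 2 * Equiv.swap 2 3
/-- The 3-cycle (234) (on Fin 4: 1↦2↦3↦1). -/
def c234 : Equiv.Perm (Fin 4) := Equiv.swap 1 2 * Equiv.swap 2 3

/-- P · sh(3,4) · (E₃⊕I₁) = Ψ·S in ℚ[GL₄(ℤ)],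
where sh(3,4) = e+(34)+(234)+(1234). -/
theorem lem_2_1_eq1 :
    emb !![1,0,0,0; -1,1,0,0; 0,-1,1,0; 0,0,-1,1]
        * (emb 1 + emb (pm (Equiv.swap 2 3)) + emb (pm c234) + emb (pm c1234))
        * emb !![1,0,0,0; 1,1,0,0; 1,1,1,0; 0,0,0,1]
      = Psi * emb !![1,0,0,0; 0,1,0,0; 0,0,1,0; -1,-1,-1,1] := by
  have h1 : (!![1,0,0,0; -1,1,0,0; 0,-1,1,0; 0,0,-1,1] : M4) * pm (Equiv.swap 2 3)
      * !![1,0,0,0; 1,1,0,0; 1,1,1,0; 0,0,0,1]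
      = !![1,0,0,0; 0,1,0,0; 0,0,1,1; 0,0,0,-1] * !![1,0,0,0; 0,1,0,0; 0,0,1,0; -1,-1,-1,1] := by decide
  have h2 : (!![1,0,0,0; -1,1,0,0; 0,-1,1,0; 0,0,-1,1] : M4) * pm c234
      * !![1,0,0,0; 1,1,0,0; 1,1,1,0; 0,0,0,1]
      = !![1,0,0,0; 0,1,1,1; 0,0,-1,-1; 0,0,1,0] * !![1,0,0,0; 0,1,0,0; 0,0,1,0; -1,-1,-1,1] := by decide
  have h3 : (!![1,0,0,0; -1,1,0,0; 0,-1,1,0; 0,0,-1,1] : M4) * pm c1234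
      * !![1,0,0,0; 1,1,0,0; 1,1,1,0; 0,0,0,1]
      = !![1,1,1,1; 0,-1,-1,-1; 0,1,0,0; 0,0,1,0] * !![1,0,0,0; 0,1,0,0; 0,0,1,0; -1,-1,-1,1] := by decide
  simp only [Psi, emb, add_mul, mul_add, MonoidAlgebra.single_mul_single, one_mul, mul_one,
    h1, h2, h3]
  rw [show (!![1,0,0,0; -1,1,0,0; 0,-1,1,0; 0,0,-1,1] : M4)
      * !![1,0,0,0; 1,1,0,0; 1,1,1,0; 0,0,0,1]
      = !![1,0,0,0; 0,1,0,0; 0,0,1,0; -1,-1,-1,1] from by decide]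
end

section
/- In the group ring ℚ[GL₄(ℤ)], with P = [[1,0,0,0],[-1,1,0,0],[0,-1,1,0],[0,0,-1,1]], R = [[1,0,0,0],[0,1,0,0],[-1,-1,1,0],[0,0,0,1]], Φ = I + [[1,0,0,0],[0,1,1,0],[0,0,-1,0],[0,0,1,1]] + [[1,1,1,0],[0,-1,-1,0],[0,1,0,0],[0,0,1,1]], and sh(2,3) = e+(23)+(123) viewed in S₄ (fixing 4), one has P · sh(2,3) · (E₂⊕E₂) = Φ·R, where E₂ = [[1,0],[1,1]] and E₂⊕E₂ = [[1,0,0,0],[1,1,0,0],[0,0,1,0],[0,0,1,1]]. -/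
/-- The 3-cycle (123) (on Fin 4: 0↦1↦2↦0, fixing 3). -/
def c123 : Equiv.Perm (Fin 4) := Equiv.swap 0 1 * Equiv.swap 1 2

/-- P · sh(2,3) · (E₂⊕E₂) = Φ·R in ℚ[GL₄(ℤ)], where sh(2,3) = e+(23)+(123)
viewed in S₄ fixing 4. -/
theorem lem_2_1_eq2 :
    emb !![1,0,0,0; -1,1,0,0; 0,-1,1,0; 0,0,-1,1]
        * (emb 1 + emb (pm (Equiv.swap 1 2)) + emb (pm c123))
        * emb !![1,0,0,0; 1,1,0,0; 0,0,1,0; 0,0,1,1]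
      = Phi * emb !![1,0,0,0; 0,1,0,0; -1,-1,1,0; 0,0,0,1] := by
  have emb_mul : ∀ A B : M4, emb A * emb B = emb (A * B) := fun A B => by
    simp [emb, MonoidAlgebra.single_mul_single]
  simp only [Phi, mul_add, add_mul, emb_mul]
  congr 1
  · congr 1
    · exact congrArg emb (by decide)
    · exact congrArg emb (by decide)
  · exact congrArg emb (by decide)
end

section
/- Let C₄ = {e,(1234),(13)(24),(1432)} ⊆ S₄ act on ℤ⁴ row vectors on the right via permutation matrices, and let J = diag(0,1,1,1), T₂ = [[0,0,0,0],[0,1,0,0],[0,0,1,0],[0,1,1,1]], T₃ = [[0,0,0,0],[0,1,0,0],[0,0,1,1],[0,1,1,0]], T₄ = [[0,0,0,0],[0,1,1,0],[0,0,0,1],[0,1,0,0]] (4×4 integer matrices). With Ψ and S as before (Ψ = I + [[1,0,0,0],[0,1,0,0],[0,0,1,1],[0,0,0,-1]] + [[1,0,0,0],[0,1,1,1],[0,0,-1,-1],[0,0,1,0]] + [[1,1,1,1],[0,-1,-1,-1],[0,1,0,0],[0,0,1,0]], S = [[1,0,0,0],[0,1,0,0],[0,0,1,0],[-1,-1,-1,1]]),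 the identity ((ΨS·∑_{σ∈C₄}σ))^{-∗}·J = (∑_{σ∈C₄}σ)·(T₂+T₃+T₄+J) holds in the matrix ring ℚ[M₄(ℤ)], where for Γ = ∑aₖMₖ in ℚ[GL₄(ℤ)] we write Γ^{-∗} = ∑aₖMₖ^{-1}. -/
/-- The inverse-star map: for Γ = ∑ aₖ Mₖ, Γ^{-∗} = ∑ aₖ Mₖ⁻¹. -/
noncomputable def invStar (Γ : QM4) : QM4 :=
  Finsupp.sum Γ.coeff (fun M a => MonoidAlgebra.single M⁻¹ a)

/-- The sum ∑_{σ∈C₄} σ over the cyclic group C₄ = {e,(1234),(13)(24),(1432)}. -/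
noncomputable def C4sum : QM4 :=
  emb 1 + emb (pm c1234) + emb (pm (c1234 ^ 2)) + emb (pm (c1234 ^ 3))

/-- J = diag(0,1,1,1). -/
def J : M4 := !![0,0,0,0; 0,1,0,0; 0,0,1,0; 0,0,0,1]

def T1 : M4 := !![0,0,0,0; 0,1,0,0; 0,1,1,0; 0,1,1,1]
def T2 : M4 := !![0,0,0,0; 0,1,0,0; 0,0,1,0; 0,1,1,1]
def T3 : M4 := !![0,0,0,0; 0,1,0,0; 0,0,1,1; 0,1,1,0]
def T4 : M4 := !![0,0,0,0; 0,1,1,0; 0,0,0,1; 0,1,0,0]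

lemma emb_mul (A B : M4) : emb A * emb B = emb (A * B) := by
  simp [emb, MonoidAlgebra.single_mul_single]

lemma invStar_add' (x y : QM4) : invStar (x + y) = invStar x + invStar y := by
  unfold invStar; rw [MonoidAlgebra.coeff_add]
  exact Finsupp.sum_add_index' (fun _ => MonoidAlgebra.single_zero _) (fun _ _ _ => MonoidAlgebra.single_add _ _ _)

lemma invStar_emb (A B : M4) (h : A * B = 1) : invStar (emb A) = emb B := by
  unfold invStar emb
  rw [MonoidAlgebra.coeff_single, Finsupp.sum_single_index (by simp), Matrix.inv_eq_right_inv h]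

lemma pmc1 : pm c1234 = !![0,0,0,1; 1,0,0,0; 0,1,0,0; 0,0,1,0] := by decide
lemma pmc2 : pm (c1234 ^ 2) = !![0,0,1,0; 0,0,0,1; 1,0,0,0; 0,1,0,0] := by decide
lemma pmc3 : pm (c1234 ^ 3) = !![0,1,0,0; 0,0,1,0; 0,0,0,1; 1,0,0,0] := by decide

lemma pr0 : (!![1,0,0,0; 0,1,0,0; 0,0,1,1; 0,0,0,-1] : M4) * !![1,0,0,0; 0,1,0,0; 0,0,1,0; -1,-1,-1,1] = !![1,0,0,0; 0,1,0,0; -1,-1,0,1; 1,1,1,-1] := by decide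
lemma pr1 : (!![1,0,0,0; 0,1,1,1; 0,0,-1,-1; 0,0,1,0] : M4) * !![1,0,0,0; 0,1,0,0; 0,0,1,0; -1,-1,-1,1] = !![1,0,0,0; -1,0,0,1; 1,1,0,-1; 0,0,1,0] := by decide
lemma pr2 : (!![1,1,1,1; 0,-1,-1,-1; 0,1,0,0; 0,0,1,0] : M4) * !![1,0,0,0; 0,1,0,0; 0,0,1,0; -1,-1,-1,1] = !![0,0,0,1; 1,0,0,-1; 0,1,0,0; 0,0,1,0] := by decide
lemma pr3 : (!![1,0,0,0; 0,1,0,0; 0,0,1,0; -1,-1,-1,1] : M4) * !![0,0,0,1; 1,0,0,0; 0,1,0,0; 0,0,1,0] = !![0,0,0,1; 1,0,0,0; 0,1,0,0; -1,-1,1,-1] := by decide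
lemma pr4 : (!![1,0,0,0; 0,1,0,0; 0,0,1,0; -1,-1,-1,1] : M4) * !![0,0,1,0; 0,0,0,1; 1,0,0,0; 0,1,0,0] = !![0,0,1,0; 0,0,0,1; 1,0,0,0; -1,1,-1,-1] := by decide
lemma pr5 : (!![1,0,0,0; 0,1,0,0; 0,0,1,0; -1,-1,-1,1] : M4) * !![0,1,0,0; 0,0,1,0; 0,0,0,1; 1,0,0,0] = !![0,1,0,0; 0,0,1,0; 0,0,0,1; 1,-1,-1,-1] := by decide
lemma pr6 : (!![1,0,0,0; 0,1,0,0; -1,-1,0,1; 1,1,1,-1] : M4) * !![0,0,0,1; 1,0,0,0; 0,1,0,0; 0,0,1,0] = !![0,0,0,1; 1,0,0,0; -1,0,1,-1; 1,1,-1,1] := by decide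
lemma pr7 : (!![1,0,0,0; 0,1,0,0; -1,-1,0,1; 1,1,1,-1] : M4) * !![0,0,1,0; 0,0,0,1; 1,0,0,0; 0,1,0,0] = !![0,0,1,0; 0,0,0,1; 0,1,-1,-1; 1,-1,1,1] := by decide
lemma pr8 : (!![1,0,0,0; 0,1,0,0; -1,-1,0,1; 1,1,1,-1] : M4) * !![0,1,0,0; 0,0,1,0; 0,0,0,1; 1,0,0,0] = !![0,1,0,0; 0,0,1,0; 1,-1,-1,0; -1,1,1,1] := by decide
lemma pr9 : (!![1,0,0,0; -1,0,0,1; 1,1,0,-1; 0,0,1,0] : M4) * !![0,0,0,1; 1,0,0,0; 0,1,0,0; 0,0,1,0] = !![0,0,0,1; 0,0,1,-1; 1,0,-1,1; 0,1,0,0] := by decide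
lemma pr10 : (!![1,0,0,0; -1,0,0,1; 1,1,0,-1; 0,0,1,0] : M4) * !![0,0,1,0; 0,0,0,1; 1,0,0,0; 0,1,0,0] = !![0,0,1,0; 0,1,-1,0; 0,-1,1,1; 1,0,0,0] := by decide
lemma pr11 : (!![1,0,0,0; -1,0,0,1; 1,1,0,-1; 0,0,1,0] : M4) * !![0,1,0,0; 0,0,1,0; 0,0,0,1; 1,0,0,0] = !![0,1,0,0; 1,-1,0,0; -1,1,1,0; 0,0,0,1] := by decide
lemma pr12 : (!![0,0,0,1; 1,0,0,-1; 0,1,0,0; 0,0,1,0] : M4) * !![0,0,0,1; 1,0,0,0; 0,1,0,0; 0,0,1,0] = !![0,0,1,0; 0,0,-1,1; 1,0,0,0; 0,1,0,0] := by decide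
lemma pr13 : (!![0,0,0,1; 1,0,0,-1; 0,1,0,0; 0,0,1,0] : M4) * !![0,0,1,0; 0,0,0,1; 1,0,0,0; 0,1,0,0] = !![0,1,0,0; 0,-1,1,0; 0,0,0,1; 1,0,0,0] := by decide
lemma pr14 : (!![0,0,0,1; 1,0,0,-1; 0,1,0,0; 0,0,1,0] : M4) * !![0,1,0,0; 0,0,1,0; 0,0,0,1; 1,0,0,0] = !![1,0,0,0; -1,1,0,0; 0,0,1,0; 0,0,0,1] := by decide
lemma iv0 : invStar (emb (!![1,0,0,0; 0,1,0,0; 0,0,1,0; -1,-1,-1,1] : M4)) = emb !![1,0,0,0; 0,1,0,0; 0,0,1,0; 1,1,1,1] := invStar_emb _ _ (by decide)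
lemma iv1 : invStar (emb (!![0,0,0,1; 1,0,0,0; 0,1,0,0; -1,-1,1,-1] : M4)) = emb !![0,1,0,0; 0,0,1,0; 1,1,1,1; 1,0,0,0] := invStar_emb _ _ (by decide)
lemma iv2 : invStar (emb (!![0,0,1,0; 0,0,0,1; 1,0,0,0; -1,1,-1,-1] : M4)) = emb !![0,0,1,0; 1,1,1,1; 1,0,0,0; 0,1,0,0] := invStar_emb _ _ (by decide)
lemma iv3 : invStar (emb (!![0,1,0,0; 0,0,1,0; 0,0,0,1; 1,-1,-1,-1] : M4)) = emb !![1,1,1,1; 1,0,0,0; 0,1,0,0; 0,0,1,0] := invStar_emb _ _ (by decide)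
lemma iv4 : invStar (emb (!![1,0,0,0; 0,1,0,0; -1,-1,0,1; 1,1,1,-1] : M4)) = emb !![1,0,0,0; 0,1,0,0; 0,0,1,1; 1,1,1,0] := invStar_emb _ _ (by decide)
lemma iv5 : invStar (emb (!![0,0,0,1; 1,0,0,0; -1,0,1,-1; 1,1,-1,1] : M4)) = emb !![0,1,0,0; 0,0,1,1; 1,1,1,0; 1,0,0,0] := invStar_emb _ _ (by decide)
lemma iv6 : invStar (emb (!![0,0,1,0; 0,0,0,1; 0,1,-1,-1; 1,-1,1,1] : M4)) = emb !![0,0,1,1; 1,1,1,0; 1,0,0,0; 0,1,0,0] := invStar_emb _ _ (by decide)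
lemma iv7 : invStar (emb (!![0,1,0,0; 0,0,1,0; 1,-1,-1,0; -1,1,1,1] : M4)) = emb !![1,1,1,0; 1,0,0,0; 0,1,0,0; 0,0,1,1] := invStar_emb _ _ (by decide)
lemma iv8 : invStar (emb (!![1,0,0,0; -1,0,0,1; 1,1,0,-1; 0,0,1,0] : M4)) = emb !![1,0,0,0; 0,1,1,0; 0,0,0,1; 1,1,0,0] := invStar_emb _ _ (by decide)
lemma iv9 : invStar (emb (!![0,0,0,1; 0,0,1,-1; 1,0,-1,1; 0,1,0,0] : M4)) = emb !![0,1,1,0; 0,0,0,1; 1,1,0,0; 1,0,0,0] := invStar_emb _ _ (by decide)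
lemma iv10 : invStar (emb (!![0,0,1,0; 0,1,-1,0; 0,-1,1,1; 1,0,0,0] : M4)) = emb !![0,0,0,1; 1,1,0,0; 1,0,0,0; 0,1,1,0] := invStar_emb _ _ (by decide)
lemma iv11 : invStar (emb (!![0,1,0,0; 1,-1,0,0; -1,1,1,0; 0,0,0,1] : M4)) = emb !![1,1,0,0; 1,0,0,0; 0,1,1,0; 0,0,0,1] := invStar_emb _ _ (by decide)
lemma iv12 : invStar (emb (!![0,0,0,1; 1,0,0,-1; 0,1,0,0; 0,0,1,0] : M4)) = emb !![1,1,0,0; 0,0,1,0; 0,0,0,1; 1,0,0,0] := invStar_emb _ _ (by decide)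
lemma iv13 : invStar (emb (!![0,0,1,0; 0,0,-1,1; 1,0,0,0; 0,1,0,0] : M4)) = emb !![0,0,1,0; 0,0,0,1; 1,0,0,0; 1,1,0,0] := invStar_emb _ _ (by decide)
lemma iv14 : invStar (emb (!![0,1,0,0; 0,-1,1,0; 0,0,0,1; 1,0,0,0] : M4)) = emb !![0,0,0,1; 1,0,0,0; 1,1,0,0; 0,0,1,0] := invStar_emb _ _ (by decide)
lemma iv15 : invStar (emb (!![1,0,0,0; -1,1,0,0; 0,0,1,0; 0,0,0,1] : M4)) = emb !![1,0,0,0; 1,1,0,0; 0,0,1,0; 0,0,0,1] := invStar_emb _ _ (by decide)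
lemma pr15 : (!![1,0,0,0; 0,1,0,0; 0,0,1,0; 1,1,1,1] : M4) * !![0,0,0,0; 0,1,0,0; 0,0,1,0; 0,0,0,1] = !![0,0,0,0; 0,1,0,0; 0,0,1,0; 0,1,1,1] := by decide
lemma pr16 : (!![0,1,0,0; 0,0,1,0; 1,1,1,1; 1,0,0,0] : M4) * !![0,0,0,0; 0,1,0,0; 0,0,1,0; 0,0,0,1] = !![0,1,0,0; 0,0,1,0; 0,1,1,1; 0,0,0,0] := by decide
lemma pr17 : (!![0,0,1,0; 1,1,1,1; 1,0,0,0; 0,1,0,0] : M4) * !![0,0,0,0; 0,1,0,0; 0,0,1,0; 0,0,0,1] = !![0,0,1,0; 0,1,1,1; 0,0,0,0; 0,1,0,0] := by decide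
lemma pr18 : (!![1,1,1,1; 1,0,0,0; 0,1,0,0; 0,0,1,0] : M4) * !![0,0,0,0; 0,1,0,0; 0,0,1,0; 0,0,0,1] = !![0,1,1,1; 0,0,0,0; 0,1,0,0; 0,0,1,0] := by decide
lemma pr19 : (!![1,0,0,0; 0,1,0,0; 0,0,1,1; 1,1,1,0] : M4) * !![0,0,0,0; 0,1,0,0; 0,0,1,0; 0,0,0,1] = !![0,0,0,0; 0,1,0,0; 0,0,1,1; 0,1,1,0] := by decide
lemma pr20 : (!![0,1,0,0; 0,0,1,1; 1,1,1,0; 1,0,0,0] : M4) * !![0,0,0,0; 0,1,0,0; 0,0,1,0; 0,0,0,1] = !![0,1,0,0; 0,0,1,1; 0,1,1,0; 0,0,0,0] := by decide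
lemma pr21 : (!![0,0,1,1; 1,1,1,0; 1,0,0,0; 0,1,0,0] : M4) * !![0,0,0,0; 0,1,0,0; 0,0,1,0; 0,0,0,1] = !![0,0,1,1; 0,1,1,0; 0,0,0,0; 0,1,0,0] := by decide
lemma pr22 : (!![1,1,1,0; 1,0,0,0; 0,1,0,0; 0,0,1,1] : M4) * !![0,0,0,0; 0,1,0,0; 0,0,1,0; 0,0,0,1] = !![0,1,1,0; 0,0,0,0; 0,1,0,0; 0,0,1,1] := by decide
lemma pr23 : (!![1,0,0,0; 0,1,1,0; 0,0,0,1; 1,1,0,0] : M4) * !![0,0,0,0; 0,1,0,0; 0,0,1,0; 0,0,0,1] = !![0,0,0,0; 0,1,1,0; 0,0,0,1; 0,1,0,0] := by decide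
lemma pr24 : (!![0,1,1,0; 0,0,0,1; 1,1,0,0; 1,0,0,0] : M4) * !![0,0,0,0; 0,1,0,0; 0,0,1,0; 0,0,0,1] = !![0,1,1,0; 0,0,0,1; 0,1,0,0; 0,0,0,0] := by decide
lemma pr25 : (!![0,0,0,1; 1,1,0,0; 1,0,0,0; 0,1,1,0] : M4) * !![0,0,0,0; 0,1,0,0; 0,0,1,0; 0,0,0,1] = !![0,0,0,1; 0,1,0,0; 0,0,0,0; 0,1,1,0] := by decide
lemma pr26 : (!![1,1,0,0; 1,0,0,0; 0,1,1,0; 0,0,0,1] : M4) * !![0,0,0,0; 0,1,0,0; 0,0,1,0; 0,0,0,1] = !![0,1,0,0; 0,0,0,0; 0,1,1,0; 0,0,0,1] := by decide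
lemma pr27 : (!![1,1,0,0; 0,0,1,0; 0,0,0,1; 1,0,0,0] : M4) * !![0,0,0,0; 0,1,0,0; 0,0,1,0; 0,0,0,1] = !![0,1,0,0; 0,0,1,0; 0,0,0,1; 0,0,0,0] := by decide
lemma pr28 : (!![0,0,1,0; 0,0,0,1; 1,0,0,0; 1,1,0,0] : M4) * !![0,0,0,0; 0,1,0,0; 0,0,1,0; 0,0,0,1] = !![0,0,1,0; 0,0,0,1; 0,0,0,0; 0,1,0,0] := by decide
lemma pr29 : (!![0,0,0,1; 1,0,0,0; 1,1,0,0; 0,0,1,0] : M4) * !![0,0,0,0; 0,1,0,0; 0,0,1,0; 0,0,0,1] = !![0,0,0,1; 0,0,0,0; 0,1,0,0; 0,0,1,0] := by decide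
lemma pr30 : (!![1,0,0,0; 1,1,0,0; 0,0,1,0; 0,0,0,1] : M4) * !![0,0,0,0; 0,1,0,0; 0,0,1,0; 0,0,0,1] = !![0,0,0,0; 0,1,0,0; 0,0,1,0; 0,0,0,1] := by decide
lemma pr31 : (!![0,0,0,1; 1,0,0,0; 0,1,0,0; 0,0,1,0] : M4) * !![0,0,0,0; 0,1,0,0; 0,0,1,0; 0,1,1,1] = !![0,1,1,1; 0,0,0,0; 0,1,0,0; 0,0,1,0] := by decide
lemma pr32 : (!![0,0,0,1; 1,0,0,0; 0,1,0,0; 0,0,1,0] : M4) * !![0,0,0,0; 0,1,0,0; 0,0,1,1; 0,1,1,0] = !![0,1,1,0; 0,0,0,0; 0,1,0,0; 0,0,1,1] := by decide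
lemma pr33 : (!![0,0,0,1; 1,0,0,0; 0,1,0,0; 0,0,1,0] : M4) * !![0,0,0,0; 0,1,1,0; 0,0,0,1; 0,1,0,0] = !![0,1,0,0; 0,0,0,0; 0,1,1,0; 0,0,0,1] := by decide
lemma pr34 : (!![0,0,0,1; 1,0,0,0; 0,1,0,0; 0,0,1,0] : M4) * !![0,0,0,0; 0,1,0,0; 0,0,1,0; 0,0,0,1] = !![0,0,0,1; 0,0,0,0; 0,1,0,0; 0,0,1,0] := by decide
lemma pr35 : (!![0,0,1,0; 0,0,0,1; 1,0,0,0; 0,1,0,0] : M4) * !![0,0,0,0; 0,1,0,0; 0,0,1,0; 0,1,1,1] = !![0,0,1,0; 0,1,1,1; 0,0,0,0; 0,1,0,0] := by decide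
lemma pr36 : (!![0,0,1,0; 0,0,0,1; 1,0,0,0; 0,1,0,0] : M4) * !![0,0,0,0; 0,1,0,0; 0,0,1,1; 0,1,1,0] = !![0,0,1,1; 0,1,1,0; 0,0,0,0; 0,1,0,0] := by decide
lemma pr37 : (!![0,0,1,0; 0,0,0,1; 1,0,0,0; 0,1,0,0] : M4) * !![0,0,0,0; 0,1,1,0; 0,0,0,1; 0,1,0,0] = !![0,0,0,1; 0,1,0,0; 0,0,0,0; 0,1,1,0] := by decide
lemma pr38 : (!![0,0,1,0; 0,0,0,1; 1,0,0,0; 0,1,0,0] : M4) * !![0,0,0,0; 0,1,0,0; 0,0,1,0; 0,0,0,1] = !![0,0,1,0; 0,0,0,1; 0,0,0,0; 0,1,0,0] := by decide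
lemma pr39 : (!![0,1,0,0; 0,0,1,0; 0,0,0,1; 1,0,0,0] : M4) * !![0,0,0,0; 0,1,0,0; 0,0,1,0; 0,1,1,1] = !![0,1,0,0; 0,0,1,0; 0,1,1,1; 0,0,0,0] := by decide
lemma pr40 : (!![0,1,0,0; 0,0,1,0; 0,0,0,1; 1,0,0,0] : M4) * !![0,0,0,0; 0,1,0,0; 0,0,1,1; 0,1,1,0] = !![0,1,0,0; 0,0,1,1; 0,1,1,0; 0,0,0,0] := by decide
lemma pr41 : (!![0,1,0,0; 0,0,1,0; 0,0,0,1; 1,0,0,0] : M4) * !![0,0,0,0; 0,1,1,0; 0,0,0,1; 0,1,0,0] = !![0,1,1,0; 0,0,0,1; 0,1,0,0; 0,0,0,0] := by decide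
lemma pr42 : (!![0,1,0,0; 0,0,1,0; 0,0,0,1; 1,0,0,0] : M4) * !![0,0,0,0; 0,1,0,0; 0,0,1,0; 0,0,0,1] = !![0,1,0,0; 0,0,1,0; 0,0,0,1; 0,0,0,0] := by decide

/-- (ΨS·∑_{σ∈C₄}σ)^{-∗}·J = (∑_{σ∈C₄}σ)·(T₂+T₃+T₄+J) in ℚ[M₄(ℤ)]. -/
theorem lem_2_2_eq4 :
    invStar (Psi * emb !![1,0,0,0; 0,1,0,0; 0,0,1,0; -1,-1,-1,1] * C4sum) * emb J
      = C4sum * (emb T2 + emb T3 + emb T4 + emb J) := by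
  simp only [Psi, C4sum, J, T2, T3, T4, pmc1, pmc2, pmc3, mul_add, add_mul, emb_mul,
    one_mul, mul_one, invStar_add', pr0, pr1, pr2, pr3, pr4, pr5, pr6, pr7, pr8, pr9, pr10, pr11, pr12, pr13, pr14, pr15, pr16, pr17, pr18, pr19, pr20, pr21, pr22, pr23, pr24, pr25, pr26, pr27, pr28, pr29, pr30, pr31, pr32, pr33, pr34, pr35, pr36, pr37, pr38, pr39, pr40, pr41, pr42, iv0, iv1, iv2, iv3, iv4, iv5, iv6, iv7, iv8, iv9, iv10, iv11, iv12, iv13, iv14, iv15]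
  abel
end

section
/- For any l₁,l₂ ≥ 1 with l₁+l₂ > 2, the sum formula for double zeta values of weight l = l₁+l₂ can be stated as: for every integer l > 2, ∑_{a=2}^{l-1} ζ(a, l-a) = ζ(l), where ζ(a,b) = ∑_{m>n>0} 1/(mᵃnᵇ) for a ≥ 2, b ≥ 1. -/
open Finset Filter ENNReal

/-! ### Auxiliary lemmas for Euler's sum formula -/

/-- Finite geometric/partial-fraction identity. -/
lemma geomid (k : ℕ) (x y : ℝ) (hy : 0 < y) (hxy : y < x) :
    ∑ i ∈ range (k+1), 1 / (x ^ (k+2-i) * y ^ (i+1)) + 1 / ((x - y) * x ^ (k+2))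
      = 1 / (y ^ (k+1) * (x - y) * x) := by
  have hx : 0 < x := hy.trans hxy
  have hx0 : x ≠ 0 := ne_of_gt hx
  have hy0 : y ≠ 0 := ne_of_gt hy
  have hd : x - y ≠ 0 := sub_ne_zero.mpr (ne_of_gt hxy)
  induction k with
  | zero =>
    rw [Finset.sum_range_one]
    norm_num
    field_simp
    ring
  | succ k ih =>
    have step : ∑ i ∈ range (k+2), 1 / (x ^ (k+3-i) * y ^ (i+1))
        = (1/x) * ∑ i ∈ range (k+1), 1 / (x ^ (k+2-i) * y ^ (i+1)) + 1 / (x^2 * y^(k+2)) := by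
      rw [Finset.sum_range_succ, Finset.mul_sum]
      congr 1
      · apply Finset.sum_congr rfl
        intro i hi
        have hik : i < k + 1 := mem_range.mp hi
        have : k + 3 - i = (k + 2 - i) + 1 := by omega
        rw [this, pow_succ]
        field_simp
      · rw [show k+3-(k+1) = 2 from by omega]
    rw [show k+1+2 = k+3 from rfl, step]
    have : (1/x) * ∑ i ∈ range (k+1), 1 / (x ^ (k+2-i) * y ^ (i+1))
        = (1/x) * (1 / (y ^ (k+1) * (x - y) * x) - 1 / ((x - y) * x ^ (k+2))) := by
      rw [← ih]; ring
    rw [this]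
    field_simp
    ring

lemma iccid (l : ℕ) (hl : 2 < l) (x y : ℝ) (hy : 0 < y) (hxy : y < x) :
    ∑ a ∈ Icc 2 (l-1), 1 / (x ^ a * y ^ (l-a)) + 1 / ((x - y) * x ^ (l-1))
      = 1 / (y ^ (l-2) * (x - y) * x) := by
  have h1 : ∑ a ∈ Icc 2 (l-1), 1 / (x ^ a * y ^ (l-a))
      = ∑ i ∈ range (l-3+1), 1 / (x ^ (l-3+2-i) * y ^ (i+1)) := by
    apply Finset.sum_nbij' (fun a => l-1-a) (fun i => l-1-i)
    · intro a ha; simp only [mem_Icc] at ha; simp only [mem_range]; omega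
    · intro i hi; simp only [mem_range] at hi; simp only [mem_Icc]; omega
    · intro a ha; simp only [mem_Icc] at ha; omega
    · intro i hi; simp only [mem_range] at hi; omega
    · intro a ha; simp only [mem_Icc] at ha
      rw [show l-3+2-(l-1-a) = a from by omega, show l-1-a+1 = l-a from by omega]
  rw [h1, show l-1 = l-3+2 from by omega, show l-2 = l-3+1 from by omega]
  exact geomid (l-3) x y hy hxy

/-- Telescoping sum. -/
lemma tele (c : ℕ) :
    HasSum (fun i : ℕ => 1/((i:ℝ)+c+1) - 1/((i:ℝ)+c+2)) (1/((c:ℝ)+1)) := by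
  have hnn : ∀ i : ℕ, 0 ≤ 1/((i:ℝ)+c+1) - 1/((i:ℝ)+c+2) := by
    intro i
    have h1 : (0:ℝ) < (i:ℝ)+c+1 := by positivity
    have h2 : ((i:ℝ)+c+1) ≤ (i:ℝ)+c+2 := by linarith
    have := one_div_le_one_div_of_le h1 h2
    linarith
  rw [hasSum_iff_tendsto_nat_of_nonneg hnn]
  have key : ∀ n : ℕ, ∑ i ∈ range n, (1/((i:ℝ)+c+1) - 1/((i:ℝ)+c+2))
      = 1/((c:ℝ)+1) - 1/((n:ℝ)+c+1) := by
    intro n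
    have h := Finset.sum_range_sub' (fun i : ℕ => 1/((i:ℝ)+c+1)) n
    push_cast at h
    rw [zero_add] at h
    rw [← h]
    apply Finset.sum_congr rfl
    intro i _
    ring_nf
  simp only [key]
  have h0 : Tendsto (fun n : ℕ => 1/((n:ℝ)+c+1)) atTop (nhds 0) := by
    have := (tendsto_one_div_atTop_nhds_zero_nat (𝕜 := ℝ)).comp (tendsto_add_atTop_nat (c+1))
    convert this using 2 with n
    · simp [Function.comp]; push_cast; ring
  simpa using tendsto_const_nhds.sub h0

/-- Harmonic number sum. -/
lemma harm (n : ℕ) (hn : 0 < n) :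
    HasSum (fun i : ℕ => 1/(((i:ℝ)+1)*((i:ℝ)+n+1)))
      ((1/(n:ℝ)) * ∑ k ∈ range n, 1/((k:ℝ)+1)) := by
  have h1 : HasSum (fun i : ℕ => ∑ k ∈ range n, (1/((i:ℝ)+k+1) - 1/((i:ℝ)+k+2)))
      (∑ k ∈ range n, 1/((k:ℝ)+1)) := hasSum_sum fun k _ => tele k
  have h2 : HasSum (fun i : ℕ => 1/((i:ℝ)+1) - 1/((i:ℝ)+n+1))
      (∑ k ∈ range n, 1/((k:ℝ)+1)) := by
    refine h1.congr_fun fun i => ?_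
    have h := Finset.sum_range_sub' (fun k : ℕ => 1/((i:ℝ)+k+1)) n
    push_cast at h
    rw [show ∑ k ∈ range n, (1/((i:ℝ)+k+1) - 1/((i:ℝ)+k+2))
        = ∑ k ∈ range n, (1/((i:ℝ)+k+1) - 1/((i:ℝ)+(k+1)+1)) from
      Finset.sum_congr rfl fun k _ => by ring_nf]
    rw [h]
    norm_num
  have h3 := h2.mul_left (1/(n:ℝ))
  refine h3.congr_fun fun i => ?_
  have hi1 : ((i:ℝ)+1) ≠ 0 := by positivity
  have hin : ((i:ℝ)+n+1) ≠ 0 := by positivity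
  have hn' : (n:ℝ) ≠ 0 := Nat.cast_ne_zero.mpr hn.ne'
  field_simp
  ring

/-- Riemann zeta value ζ(l) = ∑_{m≥1} 1/m^l. -/
noncomputable def zeta1 (l : ℕ) : ℝ := ∑' m : ℕ, 1 / ((m + 1 : ℝ)) ^ l

/-- Double zeta value ζ(a,b) = ∑_{m>n>0} 1/(mᵃnᵇ). -/
noncomputable def zeta2 (a b : ℕ) : ℝ :=
  ∑' m : {m : ℕ × ℕ // m.1 > m.2 ∧ m.2 > 0}, 1 / ((m.1.1 : ℝ) ^ a * (m.1.2 : ℝ) ^ b)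


/-! ### ENNReal-valued sums -/

noncomputable def Hn (n : ℕ) : ℝ := ∑ k ∈ range n, 1/((k:ℝ)+1)

lemma Hn_nonneg (n : ℕ) : 0 ≤ Hn n := Finset.sum_nonneg fun k _ => by positivity

noncomputable def Z1E (l : ℕ) : ℝ≥0∞ := ∑' m : ℕ, ENNReal.ofReal (1/((m:ℝ)+1)^l)

noncomputable def Z2E (a b : ℕ) : ℝ≥0∞ :=
  ∑' s : {m : ℕ × ℕ // m.1 > m.2 ∧ m.2 > 0},
    ENNReal.ofReal (1/((s.1.1:ℝ)^a * (s.1.2:ℝ)^b))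

noncomputable def AE (l : ℕ) : ℝ≥0∞ :=
  ∑' (i : ℕ) (j : ℕ), ENNReal.ofReal (1/(((j:ℝ)+1)^(l-2) * ((i:ℝ)+1) * ((i:ℝ)+j+2)))

noncomputable def BE (l : ℕ) : ℝ≥0∞ :=
  ∑' (i : ℕ) (j : ℕ), ENNReal.ofReal (1/(((i:ℝ)+1) * ((i:ℝ)+j+2)^(l-1)))

/-- main pointwise identity in `ℝ≥0∞`. -/
lemma point (l : ℕ) (hl : 2 < l) (i j : ℕ) :
    (∑ a ∈ Icc 2 (l-1), ENNReal.ofReal (1/(((i:ℝ)+j+2)^a * ((j:ℝ)+1)^(l-a))))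
      + ENNReal.ofReal (1/(((i:ℝ)+1) * ((i:ℝ)+j+2)^(l-1)))
    = ENNReal.ofReal (1/(((j:ℝ)+1)^(l-2) * ((i:ℝ)+1) * ((i:ℝ)+j+2))) := by
  have hy : (0:ℝ) < (j:ℝ)+1 := by positivity
  have hxy : ((j:ℝ)+1) < (i:ℝ)+j+2 := by
    have : (0:ℝ) ≤ i := Nat.cast_nonneg i
    linarith
  have base := iccid l hl ((i:ℝ)+j+2) ((j:ℝ)+1) hy hxy
  rw [show ((i:ℝ)+j+2) - ((j:ℝ)+1) = (i:ℝ)+1 from by ring] at base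
  rw [← ENNReal.ofReal_sum_of_nonneg (fun a _ => by positivity),
    ← ENNReal.ofReal_add (Finset.sum_nonneg fun a _ => by positivity) (by positivity), base]

def eqv : ℕ × ℕ ≃ {m : ℕ × ℕ // m.1 > m.2 ∧ m.2 > 0} where
  toFun p := ⟨(p.1 + p.2 + 2, p.2 + 1), by constructor <;> simp <;> omega⟩
  invFun s := (s.1.1 - s.1.2 - 1, s.1.2 - 1)
  left_inv p := by
    obtain ⟨i, j⟩ := p
    simp only []
    ext <;> simp <;> omega
  right_inv s := by
    obtain ⟨⟨m, n⟩, h1, h2⟩ := s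
    simp only [Subtype.mk.injEq]
    ext <;> simp <;> omega

lemma SP_eq (l : ℕ) :
    (∑' (i : ℕ) (j : ℕ), ∑ a ∈ Icc 2 (l-1),
        ENNReal.ofReal (1/(((i:ℝ)+j+2)^a * ((j:ℝ)+1)^(l-a))))
    = ∑ a ∈ Icc 2 (l-1), Z2E a (l-a) := by
  rw [← ENNReal.tsum_prod]
  rw [show (∑' p : ℕ × ℕ, ∑ a ∈ Icc 2 (l-1),
        ENNReal.ofReal (1/(((p.1:ℝ)+p.2+2)^a * ((p.2:ℝ)+1)^(l-a))))
      = ∑' p : ℕ × ℕ, ∑ a ∈ Icc 2 (l-1),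
        ENNReal.ofReal (1/(((eqv p).1.1:ℝ)^a * ((eqv p).1.2:ℝ)^(l-a))) from
    tsum_congr fun p => by
      apply Finset.sum_congr rfl
      intro a _
      simp only [eqv, Equiv.coe_fn_mk]
      push_cast
      ring_nf]
  rw [Equiv.tsum_eq eqv (fun s => ∑ a ∈ Icc 2 (l-1),
        ENNReal.ofReal (1/((s.1.1:ℝ)^a * (s.1.2:ℝ)^(l-a))))]
  exact Summable.tsum_finsetSum fun _ _ => ENNReal.summable

lemma AE_eq (l : ℕ) (hl : 2 < l) :
    AE l = ∑' j : ℕ, ENNReal.ofReal ((1/((j:ℝ)+1)^(l-1)) * Hn (j+1)) := by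
  rw [AE, ENNReal.tsum_comm]
  refine tsum_congr fun j => ?_
  have hs := harm (j+1) (Nat.succ_pos j)
  have hsum : Summable (fun i : ℕ => 1/(((i:ℝ)+1)*((i:ℝ)+(j+1:ℕ)+1))) := hs.summable
  calc ∑' i : ℕ, ENNReal.ofReal (1/(((j:ℝ)+1)^(l-2) * ((i:ℝ)+1) * ((i:ℝ)+j+2)))
      = ∑' i : ℕ, ENNReal.ofReal ((1/((j:ℝ)+1)^(l-2)) * (1/(((i:ℝ)+1)*((i:ℝ)+(j+1:ℕ)+1)))) := by
        refine tsum_congr fun i => ?_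
        congr 1
        push_cast
        rw [one_div_mul_one_div]
        ring_nf
    _ = ENNReal.ofReal (1/((j:ℝ)+1)^(l-2)) * ∑' i : ℕ,
          ENNReal.ofReal (1/(((i:ℝ)+1)*((i:ℝ)+(j+1:ℕ)+1))) := by
        simp_rw [ENNReal.ofReal_mul (by positivity : (0:ℝ) ≤ 1/((j:ℝ)+1)^(l-2))]
        exact ENNReal.tsum_mul_left
    _ = ENNReal.ofReal (1/((j:ℝ)+1)^(l-2)) *
          ENNReal.ofReal ((1/((j+1:ℕ):ℝ)) * Hn (j+1)) := by
        rw [← ENNReal.ofReal_tsum_of_nonneg (fun i => by positivity) hsum, hs.tsum_eq, Hn]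
    _ = ENNReal.ofReal ((1/((j:ℝ)+1)^(l-1)) * Hn (j+1)) := by
        rw [← ENNReal.ofReal_mul (by positivity)]
        congr 1
        push_cast
        rw [show l-1 = (l-2)+1 from by omega, pow_succ]
        have : ((j:ℝ)+1) ≠ 0 := by positivity
        field_simp

lemma BE_eq (l : ℕ) :
    BE l = ∑' m : ℕ, ENNReal.ofReal ((1/((m:ℝ)+2)^(l-1)) * Hn (m+1)) := by
  classical
  set F : ℕ → ℕ → ℝ≥0∞ := fun d m =>
    if d ≤ m then ENNReal.ofReal (1/(((d:ℝ)+1) * ((m:ℝ)+2)^(l-1))) else 0 with hF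
  have step1 : BE l = ∑' (i : ℕ) (m : ℕ), F i m := by
    rw [BE]
    refine tsum_congr fun i => ?_
    have hinj : Function.Injective (fun j : ℕ => i + j) := fun a b h => by simpa using h
    rw [← Function.Injective.tsum_eq hinj (f := fun m => F i m) ?_]
    · refine tsum_congr fun j => ?_
      simp only [hF]
      rw [if_pos (Nat.le_add_right i j)]
      congr 2
      push_cast
      ring
    · intro m hm
      simp only [Function.mem_support, hF] at hm
      by_contra hr
      apply hm
      rw [if_neg]
      intro hle
      exact hr ⟨m - i, by simp; omega⟩
  rw [step1, ENNReal.tsum_comm]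
  refine tsum_congr fun m => ?_
  have step2 : ∑' d : ℕ, F d m = ∑ d ∈ range (m+1), F d m := by
    apply tsum_eq_sum
    intro d hd
    simp only [mem_range] at hd
    simp only [hF]
    rw [if_neg (by omega)]
  rw [step2]
  have step3 : ∑ d ∈ range (m+1), F d m
      = ∑ d ∈ range (m+1), ENNReal.ofReal (1/(((d:ℝ)+1) * ((m:ℝ)+2)^(l-1))) := by
    apply Finset.sum_congr rfl
    intro d hd
    simp only [mem_range] at hd
    simp only [hF]
    rw [if_pos (by omega)]
  rw [step3, ← ENNReal.ofReal_sum_of_nonneg (fun d _ => by positivity)]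
  congr 1
  rw [Hn, Finset.mul_sum]
  apply Finset.sum_congr rfl
  intro d _
  rw [one_div_mul_one_div]
  ring

lemma AB (l : ℕ) (hl : 2 < l) :
    (∑' j : ℕ, ENNReal.ofReal ((1/((j:ℝ)+1)^(l-1)) * Hn (j+1)))
      = (∑' m : ℕ, ENNReal.ofReal ((1/((m:ℝ)+2)^(l-1)) * Hn (m+1))) + Z1E l := by
  have expandA : (∑' j : ℕ, ENNReal.ofReal ((1/((j:ℝ)+1)^(l-1)) * Hn (j+1)))
      = ENNReal.ofReal ((1/(((0:ℕ):ℝ)+1)^(l-1)) * Hn (0+1))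
        + ∑' j : ℕ, ENNReal.ofReal ((1/(((j+1:ℕ):ℝ)+1)^(l-1)) * Hn ((j+1)+1)) :=
    tsum_eq_zero_add' ENNReal.summable
  have expandZ : Z1E l
      = ENNReal.ofReal (1/(((0:ℕ):ℝ)+1)^l)
        + ∑' m : ℕ, ENNReal.ofReal (1/(((m+1:ℕ):ℝ)+1)^l) :=
    tsum_eq_zero_add' ENNReal.summable
  have key : ∀ j : ℕ,
      ENNReal.ofReal ((1/(((j+1:ℕ):ℝ)+1)^(l-1)) * Hn ((j+1)+1))
      = ENNReal.ofReal ((1/((j:ℝ)+2)^(l-1)) * Hn (j+1))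
        + ENNReal.ofReal (1/(((j+1:ℕ):ℝ)+1)^l) := by
    intro j
    have hj2 : (0:ℝ) < (j:ℝ)+2 := by positivity
    have hH : Hn (j+2) = Hn (j+1) + 1/((j:ℝ)+2) := by
      rw [Hn, Hn, Finset.sum_range_succ]
      congr 1
      push_cast
      ring
    rw [← ENNReal.ofReal_add (mul_nonneg (by positivity) (Hn_nonneg _)) (by positivity)]
    congr 1
    push_cast
    rw [show (j:ℝ)+1+1 = (j:ℝ)+2 from by ring]
    rw [show (j:ℕ)+1+1 = j+2 from rfl, hH]
    have hpow : ((j:ℝ)+2)^l = ((j:ℝ)+2)^(l-1) * ((j:ℝ)+2) := by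
      rw [← pow_succ]
      congr 1
      omega
    rw [hpow]
    field_simp
  have h00 : ENNReal.ofReal ((1/(((0:ℕ):ℝ)+1)^(l-1)) * Hn (0+1))
      = ENNReal.ofReal (1/(((0:ℕ):ℝ)+1)^l) := by
    norm_num [Hn]
  rw [expandA, expandZ, tsum_congr key, ENNReal.tsum_add, h00]
  ring

lemma sum_pow (p : ℕ) (hp : 1 < p) : Summable (fun n : ℕ => 1/((n:ℝ)+1)^p) := by
  have h1 := Real.summable_one_div_nat_pow.mpr hp
  have h2 := (summable_nat_add_iff 1).mpr h1
  exact h2.congr fun n => by push_cast; ring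

lemma Z1E_fin (l : ℕ) (hl : 1 < l) : Z1E l ≠ ⊤ := by
  rw [Z1E, ← ENNReal.ofReal_tsum_of_nonneg (fun m => by positivity) (sum_pow l hl)]
  exact ENNReal.ofReal_ne_top

lemma inner_tele (i : ℕ) :
    ∑' j : ℕ, ENNReal.ofReal (1/(((i:ℝ)+j+1) * ((i:ℝ)+j+2)))
      = ENNReal.ofReal (1/((i:ℝ)+1)) := by
  have hs : HasSum (fun j : ℕ => 1/(((i:ℝ)+j+1) * ((i:ℝ)+j+2))) (1/((i:ℝ)+1)) := by
    refine (tele i).congr_fun fun j => ?_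
    have h1 : ((j:ℝ)+i+1) ≠ 0 := by positivity
    have h2 : ((j:ℝ)+i+2) ≠ 0 := by positivity
    field_simp
    ring
  rw [← ENNReal.ofReal_tsum_of_nonneg (fun j => by positivity) hs.summable, hs.tsum_eq]

lemma BE_fin (l : ℕ) (hl : 2 < l) : BE l ≠ ⊤ := by
  have hpt : ∀ i j : ℕ, ENNReal.ofReal (1/(((i:ℝ)+1) * ((i:ℝ)+j+2)^(l-1)))
      ≤ ENNReal.ofReal ((1/((i:ℝ)+1)^(l-2)) * (1/(((i:ℝ)+j+1) * ((i:ℝ)+j+2)))) := by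
    intro i j
    apply ENNReal.ofReal_le_ofReal
    set d : ℝ := (i:ℝ)+1 with hd
    set w : ℝ := (i:ℝ)+j+1 with hw
    set m : ℝ := (i:ℝ)+j+2 with hm
    have hd0 : 0 < d := by positivity
    have hw0 : 0 < w := by positivity
    have hm0 : 0 < m := by positivity
    have hdm : d ≤ m := by rw [hd, hm]; have : (0:ℝ) ≤ j := Nat.cast_nonneg j; linarith
    have hwm : w ≤ m := by rw [hw, hm]; linarith
    rw [one_div_mul_one_div, div_le_div_iff₀ (by positivity) (by positivity)]
    have e1 : d^(l-2) = d^(l-3) * d := by rw [← pow_succ]; congr 1; omega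
    have e2 : m^(l-1) = m^(l-3) * m * m := by rw [← pow_succ, ← pow_succ]; congr 1; omega
    have h3 : d^(l-3) ≤ m^(l-3) := pow_le_pow_left₀ hd0.le hdm _
    have h4 : d^(l-3) * w ≤ m^(l-3) * m :=
      mul_le_mul h3 hwm hw0.le (by positivity)
    rw [e1, e2]
    nlinarith [mul_pos hd0 hm0, pow_pos hd0 (l-3), pow_pos hm0 (l-3)]
  have step : BE l ≤ ∑' i : ℕ, ENNReal.ofReal (1/((i:ℝ)+1)^(l-1)) := by
    refine le_trans (ENNReal.tsum_le_tsum fun i => ENNReal.tsum_le_tsum fun j => hpt i j) ?_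
    apply le_of_eq
    refine tsum_congr fun i => ?_
    calc ∑' j : ℕ, ENNReal.ofReal ((1/((i:ℝ)+1)^(l-2)) * (1/(((i:ℝ)+j+1) * ((i:ℝ)+j+2))))
        = ENNReal.ofReal (1/((i:ℝ)+1)^(l-2)) *
            ∑' j : ℕ, ENNReal.ofReal (1/(((i:ℝ)+j+1) * ((i:ℝ)+j+2))) := by
          simp_rw [ENNReal.ofReal_mul (by positivity : (0:ℝ) ≤ 1/((i:ℝ)+1)^(l-2))]
          exact ENNReal.tsum_mul_left
      _ = ENNReal.ofReal (1/((i:ℝ)+1)^(l-2)) * ENNReal.ofReal (1/((i:ℝ)+1)) := by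
          rw [inner_tele]
      _ = ENNReal.ofReal (1/((i:ℝ)+1)^(l-1)) := by
          rw [← ENNReal.ofReal_mul (by positivity), one_div_mul_one_div, ← pow_succ]
          congr 3
          omega
  have hfin : (∑' i : ℕ, ENNReal.ofReal (1/((i:ℝ)+1)^(l-1))) ≠ ⊤ := Z1E_fin (l-1) (by omega)
  exact ne_top_of_le_ne_top hfin step

lemma EK (l : ℕ) (hl : 2 < l) :
    (∑' (i : ℕ) (j : ℕ), ∑ a ∈ Icc 2 (l-1),
        ENNReal.ofReal (1/(((i:ℝ)+j+2)^a * ((j:ℝ)+1)^(l-a)))) + BE l = AE l := by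
  rw [BE, AE, ← ENNReal.tsum_add]
  refine tsum_congr fun i => ?_
  rw [← ENNReal.tsum_add]
  exact tsum_congr fun j => point l hl i j

/-- Euler's sum formula for double zeta values: ∑_{a=2}^{l-1} ζ(a, l-a) = ζ(l). -/
theorem sum_formula_dzv (l : ℕ) (hl : 2 < l) :
    ∑ a ∈ Finset.Icc 2 (l - 1), zeta2 a (l - a) = zeta1 l := by
  have emain : ∑ a ∈ Icc 2 (l-1), Z2E a (l-a) = Z1E l := by
    have h1 := EK l hl
    rw [AE_eq l hl, AB l hl, ← BE_eq l] at h1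
    rw [add_comm _ (BE l)] at h1
    have h2 := (ENNReal.add_right_inj (BE_fin l hl)).mp h1
    rw [← SP_eq l]
    exact h2
  have hZfin : Z1E l ≠ ⊤ := Z1E_fin l (by omega)
  have hsumfin : (∑ a ∈ Icc 2 (l-1), Z2E a (l-a)) ≠ ⊤ := by rw [emain]; exact hZfin
  have hfin : ∀ a ∈ Icc 2 (l-1), Z2E a (l-a) ≠ ⊤ := fun a ha =>
    ne_top_of_le_ne_top hsumfin (Finset.single_le_sum (f := fun a => Z2E a (l-a)) (fun _ _ => zero_le) ha)
  have hz2 : ∀ a b : ℕ, zeta2 a b = (Z2E a b).toReal := by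
    intro a b
    rw [zeta2, Z2E, ENNReal.tsum_toReal_eq (fun _ => ENNReal.ofReal_ne_top)]
    exact tsum_congr fun s => (ENNReal.toReal_ofReal (by positivity)).symm
  have hz1 : zeta1 l = (Z1E l).toReal := by
    rw [zeta1, Z1E, ENNReal.tsum_toReal_eq (fun _ => ENNReal.ofReal_ne_top)]
    exact tsum_congr fun m => (ENNReal.toReal_ofReal (by positivity)).symm
  calc ∑ a ∈ Icc 2 (l-1), zeta2 a (l-a)
      = ∑ a ∈ Icc 2 (l-1), (Z2E a (l-a)).toReal :=
        Finset.sum_congr rfl fun a _ => hz2 a (l-a)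
    _ = (∑ a ∈ Icc 2 (l-1), Z2E a (l-a)).toReal := (ENNReal.toReal_sum hfin).symm
    _ = (Z1E l).toReal := by rw [emain]
    _ = zeta1 l := hz1.symm
end
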